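/- The maximum lifetime of the jammer network with life spans w equals the maximum, over all multiplicity functions n assigning a natural number n(M) to each minimum reliable solution M and satisfying the life-span constraints ∑_{M : j ∈ M} n(M) ≤ w j for every jammer j, of the total ∑_M n(M). That is, the optimal schedule length coincides with the optimum of the integer linear program over the minimum reliable set. -/

import Mathlib

open Metric

/-- A finite set `A` of jammers is *reliable* if activating exactly the jammers in `A`
satisfies the SINR threshold constraints on the storage boundary `S` and the fence
boundary `F`. -/
def Reliable {J : Type*} (x : J → EuclideanSpace ℝ (Fin 2))
    (S F : Set (EuclideanSpace ℝ (Fin 2))) (PT PJ δ1 δ2 γ : ℝ) (A : Finset J) : Prop :=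
  (∀ s ∈ S, ∑ j ∈ A, dist (x j) s ^ (-γ) ≤ PT / (PJ * δ1)) ∧
  (∀ p ∈ F, ∑ j ∈ A, dist (x j) p ^ (-γ) ≥ PT * infDist p S ^ (-γ) / (PJ * δ2))

/-- `D : Fin l → Finset J` is a *schedule of length `l`* for life spans `w` if every
slot is reliable and each jammer `j` is active in at most `w j` slots. -/
def IsSchedule {J : Type*} [DecidableEq J] (x : J → EuclideanSpace ℝ (Fin 2))
    (S F : Set (EuclideanSpace ℝ (Fin 2))) (PT PJ δ1 δ2 γ : ℝ) (w : J → ℕ)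
    (l : ℕ) (D : Fin l → Finset J) : Prop :=
  (∀ i, Reliable x S F PT PJ δ1 δ2 γ (D i)) ∧
  ∀ j, (Finset.univ.filter fun i => j ∈ D i).card ≤ w j

/-- `M` is a *minimum reliable solution* if `M` is reliable and no proper subset of `M`
is reliable. -/
def MinReliable {J : Type*} (x : J → EuclideanSpace ℝ (Fin 2))
    (S F : Set (EuclideanSpace ℝ (Fin 2))) (PT PJ δ1 δ2 γ : ℝ) (M : Finset J) : Prop :=
  Reliable x S F PT PJ δ1 δ2 γ M ∧ ∀ N ⊂ M, ¬ Reliable x S F PT PJ δ1 δ2 γ N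

private lemma exists_minimal_reliable {J : Type*} [DecidableEq J]
    (x : J → EuclideanSpace ℝ (Fin 2)) (S F : Set (EuclideanSpace ℝ (Fin 2)))
    (PT PJ δ1 δ2 γ : ℝ) (A : Finset J) (hA : Reliable x S F PT PJ δ1 δ2 γ A) :
    ∃ M ⊆ A, MinReliable x S F PT PJ δ1 δ2 γ M := by
  classical
  have hne : (A.powerset.filter fun B => Reliable x S F PT PJ δ1 δ2 γ B).Nonempty :=
    ⟨A, by simp [hA]⟩
  obtain ⟨M, hM, hmin'⟩ := Finset.exists_minimal hne
  have hmin : ∀ N ∈ (A.powerset.filter fun B => Reliable x S F PT PJ δ1 δ2 γ B), ¬ N < M :=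
    fun N hN hlt => hlt.not_ge (hmin' hN hlt.le)
  simp only [Finset.mem_filter, Finset.mem_powerset] at hM
  refine ⟨M, hM.1, hM.2, fun N hN hrel => ?_⟩
  exact hmin N (Finset.mem_filter.mpr
    ⟨Finset.mem_powerset.mpr (hN.subset.trans hM.1), hrel⟩) hN

/-- The maximum lifetime of the jammer network equals the optimum of the integer linear
program over the minimum reliable set: a multiplicity `n M` for each minimum reliable
solution `M`, subject to `∑_{M ∋ j} n M ≤ w j` for every jammer `j`, maximizing
`∑ M, n M`. -/
theorem lifetime_eq_ILP_optimum {J : Type*} [Fintype J] [DecidableEq J]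
    (x : J → EuclideanSpace ℝ (Fin 2)) (S F : Set (EuclideanSpace ℝ (Fin 2)))
    (PT PJ δ1 δ2 γ : ℝ) (w : J → ℕ) (L : ℕ) :
    IsGreatest {l : ℕ |
        ∃ D : Fin l → Finset J, IsSchedule x S F PT PJ δ1 δ2 γ w l D} L ↔
    IsGreatest {t : ℕ | ∃ n : Finset J → ℕ,
        (∀ M : Finset J, n M ≠ 0 → MinReliable x S F PT PJ δ1 δ2 γ M) ∧
        (∀ j : J, ∑ M : Finset J, (if j ∈ M then n M else 0) ≤ w j) ∧
        t = ∑ M : Finset J, n M} L := by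
  classical
  have hset : {l : ℕ | ∃ D : Fin l → Finset J, IsSchedule x S F PT PJ δ1 δ2 γ w l D} =
      {t : ℕ | ∃ n : Finset J → ℕ,
        (∀ M : Finset J, n M ≠ 0 → MinReliable x S F PT PJ δ1 δ2 γ M) ∧
        (∀ j : J, ∑ M : Finset J, (if j ∈ M then n M else 0) ≤ w j) ∧
        t = ∑ M : Finset J, n M} := by
    ext l
    simp only [Set.mem_setOf_eq]
    constructor
    · rintro ⟨D, hD, hw⟩
      choose f hfsub hfmin using fun i => exists_minimal_reliable x S F PT PJ δ1 δ2 γ (D i) (hD i)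
      refine ⟨fun M => (Finset.univ.filter fun i => f i = M).card, ?_, ?_, ?_⟩
      · intro M hM
        rcases Finset.card_ne_zero.mp hM with ⟨i, hi⟩
        simp only [Finset.mem_filter] at hi
        exact hi.2 ▸ hfmin i
      · intro j
        have hsum : ∑ M : Finset J,
            (if j ∈ M then (Finset.univ.filter fun i => f i = M).card else 0) =
            (Finset.univ.filter fun i : Fin l => j ∈ f i).card := by
          rw [← Finset.sum_filter]
          rw [Finset.card_eq_sum_card_fiberwise
            (f := f) (t := Finset.univ.filter fun M => j ∈ M)
            (fun i hi => Finset.mem_filter.mpr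
              ⟨Finset.mem_univ _, (Finset.mem_filter.mp hi).2⟩)]
          refine Finset.sum_congr rfl fun M hM => ?_
          simp only [Finset.mem_filter, Finset.mem_univ, true_and] at hM
          congr 1
          ext i
          simp only [Finset.mem_filter, Finset.mem_univ, true_and]
          exact ⟨fun h => ⟨h ▸ hM, h⟩, And.right⟩
        rw [hsum]
        refine le_trans (Finset.card_le_card ?_) (hw j)
        intro i hi
        simp only [Finset.mem_filter, Finset.mem_univ, true_and] at hi ⊢
        exact hfsub i hi
      · have h := Finset.card_eq_sum_card_fiberwise (f := f)
          (s := (Finset.univ : Finset (Fin l))) (t := (Finset.univ : Finset (Finset J)))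
          (fun i _ => Finset.mem_univ _)
        simpa using h
    · rintro ⟨n, hmin, hw, rfl⟩
      have hcard : Fintype.card (Σ M : Finset J, Fin (n M)) = ∑ M : Finset J, n M := by
        simp [Fintype.card_sigma]
      let e : (Σ M : Finset J, Fin (n M)) ≃ Fin (∑ M : Finset J, n M) :=
        Fintype.equivFinOfCardEq hcard
      refine ⟨fun i => (e.symm i).1, fun i => ?_, fun j => ?_⟩
      · have hpos : n (e.symm i).1 ≠ 0 := (e.symm i).2.pos.ne'
        exact (hmin _ hpos).1
      · have h1 : (Finset.univ.filter fun i => j ∈ (e.symm i).1).card =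
            Fintype.card {i : Fin (∑ M : Finset J, n M) // j ∈ (e.symm i).1} :=
          (Fintype.card_subtype _).symm
        have h2 : Fintype.card {i : Fin (∑ M : Finset J, n M) // j ∈ (e.symm i).1} =
            Fintype.card {σ : Σ M : Finset J, Fin (n M) // j ∈ σ.1} :=
          Fintype.card_congr (e.symm.subtypeEquiv fun i => Iff.rfl)
        have h3 : Fintype.card {σ : Σ M : Finset J, Fin (n M) // j ∈ σ.1} =
            (Finset.univ.filter fun σ : Σ M : Finset J, Fin (n M) => j ∈ σ.1).card :=
          Fintype.card_subtype _
        have h4 : (Finset.univ.filter fun σ : Σ M : Finset J, Fin (n M) => j ∈ σ.1).card =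
            ∑ M : Finset J, (if j ∈ M then n M else 0) := by
          rw [Finset.card_filter, ← Finset.univ_sigma_univ, Finset.sum_sigma]
          refine Finset.sum_congr rfl fun M _ => ?_
          by_cases h : j ∈ M <;> simp [h]
        calc (Finset.univ.filter fun i => j ∈ (e.symm i).1).card
            = ∑ M : Finset J, (if j ∈ M then n M else 0) := by rw [h1, h2, h3, h4]
          _ ≤ w j := hw j
  rw [hset]
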